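/- For finitely supported probability distributions p and q on a finite type, the squared total variation distance D_TV(p‖q)^2 = ((1/2)·Σᵢ |pᵢ - qᵢ|)^2 is at most the KL divergence D_KL(p‖q) = Σᵢ pᵢ·log(pᵢ/qᵢ), provided q has full support. -/

import Mathlib

open Real

-- For 0 < t ≤ 1 : t^2 - 1 ≤ 2*t*log t
lemma aux_A {t : ℝ} (ht : 0 < t) (ht1 : t ≤ 1) : t^2 - 1 ≤ 2 * t * Real.log t := by
  have H : AntitoneOn (fun x : ℝ => 2 * x * Real.log x - x^2 + 1) (Set.Icc t 1) := by
    apply antitoneOn_of_deriv_nonpos (convex_Icc t 1)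
    · apply ContinuousOn.add (ContinuousOn.sub ?_ (by fun_prop)) continuousOn_const
      exact ContinuousOn.mul (by fun_prop) (Real.continuousOn_log.mono (by
        intro x hx; simp only [Set.mem_compl_iff, Set.mem_singleton_iff]
        exact ne_of_gt (lt_of_lt_of_le ht hx.1)))
    · intro x hx
      rw [interior_Icc] at hx
      have hx0 : 0 < x := lt_of_lt_of_le ht hx.1.le
      apply DifferentiableAt.differentiableWithinAt
      have : DifferentiableAt ℝ Real.log x := Real.differentiableAt_log hx0.ne'
      fun_prop
    · intro x hx
      rw [interior_Icc] at hx
      have hx0 : 0 < x := lt_of_lt_of_le ht hx.1.le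
      have hd : HasDerivAt (fun x : ℝ => 2 * x * Real.log x - x^2 + 1)
          (2 * Real.log x + 2 - 2*x) x := by
        have h1 := ((hasDerivAt_id x).const_mul (2:ℝ)).mul (Real.hasDerivAt_log hx0.ne')
        have h2 := hasDerivAt_pow 2 x
        convert (h1.sub h2).add_const 1 using 1
        all_goals try rfl
        simp only [id]; field_simp; try ring
      rw [hd.deriv]
      have hlog : Real.log x ≤ x - 1 := Real.log_le_sub_one_of_pos hx0
      nlinarith
  have := H (Set.mem_Icc.2 ⟨le_refl t, ht1⟩) (Set.mem_Icc.2 ⟨ht1, le_refl 1⟩) ht1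
  simp at this
  nlinarith

-- For 1 ≤ t : 3*t^2 - 4*t + 1 ≤ 2*t^2*log t
lemma aux_B {t : ℝ} (ht : 1 ≤ t) : 3*t^2 - 4*t + 1 ≤ 2 * t^2 * Real.log t := by
  have H : MonotoneOn (fun x : ℝ => 2 * x^2 * Real.log x - 3*x^2 + 4*x - 1) (Set.Icc 1 t) := by
    apply monotoneOn_of_deriv_nonneg (convex_Icc 1 t)
    · apply ContinuousOn.sub (ContinuousOn.add (ContinuousOn.sub ?_ (by fun_prop)) (by fun_prop))
        continuousOn_const
      exact ContinuousOn.mul (by fun_prop) (Real.continuousOn_log.mono (by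
        intro x hx; simp only [Set.mem_compl_iff, Set.mem_singleton_iff]
        exact ne_of_gt (lt_of_lt_of_le one_pos hx.1)))
    · intro x hx
      rw [interior_Icc] at hx
      have hx0 : 0 < x := lt_of_lt_of_le one_pos hx.1.le
      apply DifferentiableAt.differentiableWithinAt
      have : DifferentiableAt ℝ Real.log x := Real.differentiableAt_log hx0.ne'
      fun_prop
    · intro x hx
      rw [interior_Icc] at hx
      have hx0 : 0 < x := lt_of_lt_of_le one_pos hx.1.le
      have hd : HasDerivAt (fun x : ℝ => 2 * x^2 * Real.log x - 3*x^2 + 4*x - 1)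
          (4 * x * Real.log x + 2*x - 6*x + 4) x := by
        have h1 := ((hasDerivAt_pow 2 x).const_mul (2:ℝ)).mul (Real.hasDerivAt_log hx0.ne')
        have h2 := (hasDerivAt_pow 2 x).const_mul (3:ℝ)
        have h3 := (hasDerivAt_id x).const_mul (4:ℝ)
        convert ((h1.sub h2).add h3).sub_const 1 using 1
        all_goals try rfl
        field_simp; try ring
      rw [hd.deriv]
      have hlog : 1 - 1/x ≤ Real.log x := by
        have := Real.log_le_sub_one_of_pos (show (0:ℝ) < 1/x by positivity)
        rw [Real.log_div one_ne_zero hx0.ne', Real.log_one] at this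
        linarith
      have : x - 1 ≤ x * Real.log x := by
        have h := mul_le_mul_of_nonneg_left hlog hx0.le
        have h2 : x * (1/x) = 1 := by field_simp
        nlinarith
      nlinarith
  have := H (Set.mem_Icc.2 ⟨le_refl 1, ht⟩) (Set.mem_Icc.2 ⟨ht, le_refl t⟩) ht
  simp at this
  nlinarith

lemma aux_pt {a b : ℝ} (ha : 0 ≤ a) (hb : 0 < b) :
    (a - b)^2 / (2 * max a b) ≤ a * Real.log (a / b) - a + b := by
  rcases eq_or_lt_of_le ha with h0 | ha
  · have ha0 : a = 0 := h0.symm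
    subst ha0
    rw [max_eq_right hb.le]
    have e : ((0:ℝ) - b)^2 / (2*b) = b/2 := by field_simp; try ring
    rw [e]
    simp
    linarith
  rcases le_total a b with hab | hab
  · -- a ≤ b, use aux_A with t = a/b
    have ht : 0 < a / b := by positivity
    have ht1 : a / b ≤ 1 := (div_le_one hb).2 hab
    have key := aux_A ht ht1
    rw [max_eq_right hab, div_le_iff₀ (by positivity)]
    have hb2 : (0:ℝ) < b^2 := by positivity
    have k2 := mul_le_mul_of_nonneg_left key hb2.le
    have e1 : b^2 * ((a/b)^2 - 1) = a^2 - b^2 := by field_simp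
    have e2 : b^2 * (2 * (a/b) * Real.log (a/b)) = 2 * a * b * Real.log (a/b) := by
      field_simp; try ring
    rw [e1, e2] at k2
    nlinarith
  · -- b ≤ a, use aux_B with t = a/b
    have ht : 1 ≤ a / b := (one_le_div hb).2 hab
    have key := aux_B ht
    rw [max_eq_left hab, div_le_iff₀ (by positivity)]
    have hb2 : (0:ℝ) < b^2 := by positivity
    have k2 := mul_le_mul_of_nonneg_left key hb2.le
    have e1 : b^2 * (3*(a/b)^2 - 4*(a/b) + 1) = 3*a^2 - 4*a*b + b^2 := by field_simp; try ring
    have e2 : b^2 * (2 * (a/b)^2 * Real.log (a/b)) = 2 * a^2 * Real.log (a/b) := by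
      field_simp; try ring
    rw [e1, e2] at k2
    nlinarith

theorem tv_sq_le_kl {I : Type*} [Fintype I] (p q : I → ℝ)
    (hp0 : ∀ i, 0 ≤ p i) (hq0 : ∀ i, 0 < q i)
    (hp1 : ∑ i, p i = 1) (hq1 : ∑ i, q i = 1) :
    ((1 / 2) * ∑ i, |p i - q i|) ^ 2 ≤ ∑ i, p i * Real.log (p i / q i) := by
  set m : I → ℝ := fun i => 2 * max (p i) (q i) with hm
  have hm0 : ∀ i ∈ Finset.univ, (0:ℝ) < m i := fun i _ =>
    mul_pos two_pos (lt_max_of_lt_right (hq0 i))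
  have CS := Finset.sq_sum_div_le_sum_sq_div Finset.univ (fun i => |p i - q i|) hm0
  have habs : ∀ i, |p i - q i| ^ 2 = (p i - q i)^2 := fun i => sq_abs _
  have hS : ∑ i, |p i - q i| ^ 2 / m i ≤ ∑ i, p i * Real.log (p i / q i) := by
    have h1 : ∀ i, |p i - q i| ^ 2 / m i ≤ p i * Real.log (p i / q i) - p i + q i := by
      intro i; rw [habs i]; exact aux_pt (hp0 i) (hq0 i)
    calc ∑ i, |p i - q i| ^ 2 / m i ≤ ∑ i, (p i * Real.log (p i / q i) - p i + q i) :=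
          Finset.sum_le_sum (fun i _ => h1 i)
      _ = ∑ i, p i * Real.log (p i / q i) := by
          rw [Finset.sum_add_distrib, Finset.sum_sub_distrib, hp1, hq1]; ring
  have hmsum : ∑ i, m i ≤ 4 := by
    have : ∀ i, m i ≤ 2 * (p i + q i) := fun i => by
      have h1 := hp0 i; have h2 := (hq0 i).le
      have : max (p i) (q i) ≤ p i + q i := max_le (by linarith) (by linarith)
      simpa [hm] using (by linarith : 2 * max (p i) (q i) ≤ 2 * (p i + q i))
    calc ∑ i, m i ≤ ∑ i, 2 * (p i + q i) := Finset.sum_le_sum (fun i _ => this i)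
      _ = 4 := by rw [← Finset.mul_sum, Finset.sum_add_distrib, hp1, hq1]; norm_num
  have hT0 : (0:ℝ) ≤ (∑ i, |p i - q i|)^2 := sq_nonneg _
  have hI : Nonempty I := by
    by_contra hI
    rw [not_nonempty_iff] at hI
    have : (1:ℝ) = 0 := by
      rw [← hp1]; exact Finset.sum_eq_zero (fun i _ => (hI.false i).elim)
    norm_num at this
  have hne : (Finset.univ : Finset I).Nonempty := Finset.univ_nonempty
  have hmpos : (0:ℝ) < ∑ i, m i := Finset.sum_pos hm0 hne
  have step : (∑ i, |p i - q i|)^2 / 4 ≤ (∑ i, |p i - q i|)^2 / ∑ i, m i :=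
    div_le_div_of_nonneg_left hT0 hmpos hmsum
  calc ((1 / 2) * ∑ i, |p i - q i|) ^ 2 = (∑ i, |p i - q i|)^2 / 4 := by ring
    _ ≤ (∑ i, |p i - q i|)^2 / ∑ i, m i := step
    _ ≤ ∑ i, |p i - q i| ^ 2 / m i := CS
    _ ≤ ∑ i, p i * Real.log (p i / q i) := hS
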